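/- For every k > 0 and every y ≥ 0, the speckle reparameterized data-fit γ_{k,y} is differentiable at every point of ℝ and its derivative is Lipschitz continuous on ℝ with constant max(y·k, 1). -/

import Mathlib

/-- **Speckle reparameterized data-fit has a Lipschitz gradient.**
For every k > 0 and every y ≥ 0, γ_{k,y} is differentiable at every point of ℝ
and its derivative is Lipschitz continuous on ℝ with constant max(y·k, 1). -/
theorem speckle_reparam_datafit_lipschitz_grad
    (k : ℝ) (hk : 0 < k) (y : ℝ) (hy : 0 ≤ y) :
    Differentiable ℝ (fun θ : ℝ =>
      if θ ≤ 0 then y * k * Real.exp θ - θ - Real.log k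
      else y * k * (1 + θ) - Real.log (1 + θ) - Real.log k) ∧
    ∀ a b : ℝ,
      |deriv (fun θ : ℝ =>
        if θ ≤ 0 then y * k * Real.exp θ - θ - Real.log k
        else y * k * (1 + θ) - Real.log (1 + θ) - Real.log k) a
       - deriv (fun θ : ℝ =>
        if θ ≤ 0 then y * k * Real.exp θ - θ - Real.log k
        else y * k * (1 + θ) - Real.log (1 + θ) - Real.log k) b|
      ≤ max (y * k) 1 * |a - b| := by
  set f : ℝ → ℝ := fun θ =>
    if θ ≤ 0 then y * k * Real.exp θ - θ - Real.log k
    else y * k * (1 + θ) - Real.log (1 + θ) - Real.log k with hf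
  set g : ℝ → ℝ := fun θ =>
    if θ ≤ 0 then y * k * Real.exp θ - 1 else y * k - 1 / (1 + θ) with hg
  -- the two smooth pieces
  have h1 : ∀ θ : ℝ, HasDerivAt (fun θ : ℝ => y * k * Real.exp θ - θ - Real.log k)
      (y * k * Real.exp θ - 1) θ := by
    intro θ
    have := ((Real.hasDerivAt_exp θ).const_mul (y * k)).sub (hasDerivAt_id θ)
    simpa using this.sub_const (Real.log k)
  have h2 : ∀ θ : ℝ, -1 < θ → HasDerivAt (fun θ : ℝ => y * k * (1 + θ) - Real.log (1 + θ) - Real.log k)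
      (y * k - 1 / (1 + θ)) θ := by
    intro θ hθ
    have hne : (1 : ℝ) + θ ≠ 0 := by linarith
    have hlin : HasDerivAt (fun θ : ℝ => (1 : ℝ) + θ) 1 θ := by
      simpa using (hasDerivAt_id θ).const_add (1 : ℝ)
    have hlog : HasDerivAt (fun θ : ℝ => Real.log (1 + θ)) (1 / (1 + θ)) θ :=
      hlin.log hne
    have := ((hlin.const_mul (y * k)).sub hlog).sub_const (Real.log k)
    simpa [mul_one] using this
  -- EqOn facts
  have heq1 : Set.EqOn f (fun θ : ℝ => y * k * Real.exp θ - θ - Real.log k) (Set.Iic 0) := by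
    intro θ hθ
    have hθ' : θ ≤ 0 := hθ
    simp only [hf]; rw [if_pos hθ']
  have heq2 : Set.EqOn f (fun θ : ℝ => y * k * (1 + θ) - Real.log (1 + θ) - Real.log k)
      (Set.Ici 0) := by
    intro θ hθ
    have hθ' : (0:ℝ) ≤ θ := hθ
    rcases eq_or_lt_of_le hθ' with h | h
    · simp only [hf, ← h]; norm_num
    · simp only [hf]; rw [if_neg (not_le.mpr h)]
  have hderiv : ∀ θ : ℝ, HasDerivAt f (g θ) θ := by
    intro θ
    rcases lt_trichotomy θ 0 with h | h | h
    · have hev : f =ᶠ[nhds θ] (fun θ : ℝ => y * k * Real.exp θ - θ - Real.log k) := by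
        filter_upwards [Iio_mem_nhds h] with x hx
        exact heq1 (Set.mem_Iic.mpr (le_of_lt hx))
      have := (h1 θ).congr_of_eventuallyEq hev
      simpa [hg, if_pos h.le] using this
    · subst h
      have hleft : HasDerivWithinAt f (y * k - 1) (Set.Iic 0) 0 := by
        have := (h1 0).hasDerivWithinAt.congr heq1 (heq1 (Set.mem_Iic.mpr le_rfl))
        simpa using this
      have hright : HasDerivWithinAt f (y * k - 1) (Set.Ici 0) 0 := by
        have := (h2 0 (by norm_num)).hasDerivWithinAt.congr heq2
          (heq2 (Set.mem_Ici.mpr le_rfl))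
        simpa using this
      have hu := hleft.union hright
      rw [Set.Iic_union_Ici, hasDerivWithinAt_univ] at hu
      have hg0 : g 0 = y * k - 1 := by simp [hg]
      rw [hg0]; exact hu
    · have hev : f =ᶠ[nhds θ] (fun θ : ℝ => y * k * (1 + θ) - Real.log (1 + θ) - Real.log k) := by
        filter_upwards [Ioi_mem_nhds h] with x hx
        exact heq2 (Set.mem_Ici.mpr (le_of_lt hx))
      have := (h2 θ (by linarith)).congr_of_eventuallyEq hev
      simpa [hg, if_neg (not_le.mpr h)] using this
  have hdiff : Differentiable ℝ f := fun θ => (hderiv θ).differentiableAt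
  refine ⟨hdiff, ?_⟩
  have hdg : ∀ θ, deriv f θ = g θ := fun θ => (hderiv θ).deriv
  set L : ℝ := max (y * k) 1 with hL
  have hL1 : (1 : ℝ) ≤ L := le_max_right _ _
  have hLyk : y * k ≤ L := le_max_left _ _
  have geq1 : Set.EqOn g (fun θ : ℝ => y * k * Real.exp θ - 1) (Set.Iic 0) := by
    intro θ hθ
    have hθ' : θ ≤ 0 := hθ
    simp only [hg]; rw [if_pos hθ']
  have geq2 : Set.EqOn g (fun θ : ℝ => y * k - 1 / (1 + θ)) (Set.Ici 0) := by
    intro θ hθ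
    have hθ' : (0:ℝ) ≤ θ := hθ
    rcases eq_or_lt_of_le hθ' with h | h
    · simp only [hg, ← h]; norm_num
    · simp only [hg]; rw [if_neg (not_le.mpr h)]
  have key1 : ∀ a ∈ Set.Iic (0:ℝ), ∀ b ∈ Set.Iic (0:ℝ), |g a - g b| ≤ L * |a - b| := by
    intro a ha b hb
    have hd : ∀ x ∈ Set.Iic (0:ℝ), HasDerivWithinAt g (y * k * Real.exp x) (Set.Iic 0) x := by
      intro x hx
      have hx' : HasDerivAt (fun θ : ℝ => y * k * Real.exp θ - 1) (y * k * Real.exp x) x := by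
        simpa using ((Real.hasDerivAt_exp x).const_mul (y * k)).sub_const 1
      exact hx'.hasDerivWithinAt.congr geq1 (geq1 hx)
    have hb' : ∀ x ∈ Set.Iic (0:ℝ), ‖y * k * Real.exp x‖ ≤ L := by
      intro x hx
      have hx' : x ≤ 0 := hx
      have hexp : Real.exp x ≤ 1 := Real.exp_le_one_iff.mpr hx'
      have : y * k * Real.exp x ≤ y * k * 1 :=
        mul_le_mul_of_nonneg_left hexp (by positivity)
      rw [Real.norm_eq_abs, abs_of_nonneg (by positivity)]
      linarith [hLyk]
    have := Convex.norm_image_sub_le_of_norm_hasDerivWithin_le hd hb' (convex_Iic 0) hb ha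
    simpa [Real.norm_eq_abs] using this
  have key2 : ∀ a ∈ Set.Ici (0:ℝ), ∀ b ∈ Set.Ici (0:ℝ), |g a - g b| ≤ L * |a - b| := by
    intro a ha b hb
    have hd : ∀ x ∈ Set.Ici (0:ℝ), HasDerivWithinAt g (1 / (1 + x)^2) (Set.Ici 0) x := by
      intro x hx
      have hx' : (0:ℝ) ≤ x := hx
      have hne : (1 : ℝ) + x ≠ 0 := by positivity
      have hlin : HasDerivAt (fun θ : ℝ => (1 : ℝ) + θ) 1 x := by
        simpa using (hasDerivAt_id x).const_add (1 : ℝ)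
      have hinv : HasDerivAt (fun θ : ℝ => 1 / (1 + θ)) (-(1 / (1 + x)^2)) x := by
        have := hlin.inv hne
        simpa [one_div, div_eq_mul_inv, Pi.inv_def] using this
      have hmain : HasDerivAt (fun θ : ℝ => y * k - 1 / (1 + θ)) (1 / (1 + x)^2) x := by
        simpa using (hinv.const_sub (y * k))
      exact hmain.hasDerivWithinAt.congr geq2 (geq2 hx)
    have hb' : ∀ x ∈ Set.Ici (0:ℝ), ‖1 / (1 + x)^2‖ ≤ L := by
      intro x hx
      have hx' : (0:ℝ) ≤ x := hx
      have h1x : (1:ℝ) ≤ (1 + x)^2 := by nlinarith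
      have : (1:ℝ) / (1 + x)^2 ≤ 1 := by
        rw [div_le_one (by nlinarith)]; exact h1x
      rw [Real.norm_eq_abs, abs_of_nonneg (by positivity)]
      linarith [hL1]
    have := Convex.norm_image_sub_le_of_norm_hasDerivWithin_le hd hb' (convex_Ici 0) hb ha
    simpa [Real.norm_eq_abs] using this
  intro a b
  rw [hdg, hdg]
  have h0i : (0:ℝ) ∈ Set.Iic (0:ℝ) := Set.mem_Iic.mpr le_rfl
  have h0c : (0:ℝ) ∈ Set.Ici (0:ℝ) := Set.mem_Ici.mpr le_rfl
  rcases le_or_gt a 0 with ha | ha <;> rcases le_or_gt b 0 with hb | hb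
  · exact key1 a ha b hb
  · have h1' := key1 a ha 0 h0i
    have h2' := key2 0 h0c b (Set.mem_Ici.mpr hb.le)
    have habs : |a - 0| + |0 - b| = |a - b| := by
      rw [abs_of_nonpos (by linarith), abs_of_nonpos (by linarith),
        abs_of_nonpos (by linarith)]; ring
    calc |g a - g b| ≤ |g a - g 0| + |g 0 - g b| := abs_sub_le _ _ _
      _ ≤ L * |a - 0| + L * |0 - b| := add_le_add h1' h2'
      _ = L * (|a - 0| + |0 - b|) := by ring
      _ = L * |a - b| := by rw [habs]
  · have h1' := key2 a (Set.mem_Ici.mpr ha.le) 0 h0c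
    have h2' := key1 0 h0i b hb
    have habs : |a - 0| + |0 - b| = |a - b| := by
      rw [abs_of_nonneg (by linarith), abs_of_nonneg (by linarith),
        abs_of_nonneg (by linarith)]; ring
    calc |g a - g b| ≤ |g a - g 0| + |g 0 - g b| := abs_sub_le _ _ _
      _ ≤ L * |a - 0| + L * |0 - b| := add_le_add h1' h2'
      _ = L * (|a - 0| + |0 - b|) := by ring
      _ = L * |a - b| := by rw [habs]
  · exact key2 a (Set.mem_Ici.mpr ha.le) b (Set.mem_Ici.mpr hb.le)
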